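/- Let A be a directed-complete generalized ultrametric semilattice with distance set P, let F : A → A be strictly contracting, and let x ∈ A be the unique fixed point of F. For any a ∈ A, let g be a function from ordinals to A such that g(0) = F(a) ⊓ F(F(a)), g(α+1) = F(g(α)) ⊓ F(F(g(α))) for every ordinal α, and for every limit ordinal λ, g(λ) is a least upper bound of {g(β) : β < λ} in (A, ⊑). Then for every ordinal κ such that there is no strictly order-preserving map from the ordinals below κ into (A, ⊑), one has g(κ) = x. -/

import Mathlib

/-- A generalized ultrametric semilattice over a meet-semilattice `A`
(with induced order `a ⊑ b ↔ a ⊓ b = a`, i.e. the `≤` of `SemilatticeInf`)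
and a pointed partially ordered distance set `P` with least element `⊥`. -/
structure GUSemilattice (A : Type*) (P : Type*) [SemilatticeInf A] [PartialOrder P] [OrderBot P] where
  d : A → A → P
  d_eq_bot_iff : ∀ a₁ a₂ : A, d a₁ a₂ = ⊥ ↔ a₁ = a₂
  d_symm : ∀ a₁ a₂ : A, d a₁ a₂ = d a₂ a₁
  d_ultra : ∀ (a₁ a₂ a₃ : A) (p : P), d a₁ a₂ ≤ p → d a₂ a₃ ≤ p → d a₁ a₃ ≤ p
  inf_le_inf_of_d_le : ∀ a₁ a₂ a₃ : A, d a₁ a₂ ≤ d a₁ a₃ → a₁ ⊓ a₃ ≤ a₁ ⊓ a₂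
  d_inf_inf_le : ∀ a₁ a₂ a₃ : A, d (a₁ ⊓ a₂) (a₁ ⊓ a₃) ≤ d a₂ a₃

variable {A P : Type*} [SemilatticeInf A] [PartialOrder P] [OrderBot P]

/-- `F` is contracting. -/
def GUSemilattice.Contracting (S : GUSemilattice A P) (F : A → A) : Prop :=
  ∀ a₁ a₂ : A, S.d (F a₁) (F a₂) ≤ S.d a₁ a₂

/-- `F` is strictly contracting. -/
def GUSemilattice.StrictlyContracting (S : GUSemilattice A P) (F : A → A) : Prop :=
  ∀ a₁ a₂ : A, a₁ ≠ a₂ → S.d (F a₁) (F a₂) < S.d a₁ a₂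

/-- `F` is strictly contracting on orbits. -/
def GUSemilattice.StrictlyContractingOnOrbits (S : GUSemilattice A P) (F : A → A) : Prop :=
  ∀ a : A, a ≠ F a → S.d (F a) (F (F a)) < S.d a (F a)

/-- A ball in the generalized ultrametric space associated with `S`. -/
def GUSemilattice.IsBall (S : GUSemilattice A P) (B : Set A) : Prop :=
  ∃ (a : A) (p : P), B = {x : A | S.d x a ≤ p}

/-- Spherical completeness: every nonempty chain of balls has nonempty intersection. -/
def GUSemilattice.SphericallyComplete (S : GUSemilattice A P) : Prop :=
  ∀ C : Set (Set A), C.Nonempty → IsChain (· ⊆ ·) C → (∀ B ∈ C, S.IsBall B) → (⋂₀ C).Nonempty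

/-- Directed-completeness: every nonempty directed subset has a least upper bound. -/
def DirectedComplete (A : Type*) [Preorder A] : Prop :=
  ∀ D : Set A, D.Nonempty → DirectedOn (· ≤ ·) D → ∃ s : A, IsLUB D s

/-! ### Auxiliary lemmas for the fixed-point theorem -/

/-- The distance from a point to itself is `⊥`. -/
lemma GUS_d_self (S : GUSemilattice A P) (a : A) : S.d a a = ⊥ :=
  (S.d_eq_bot_iff a a).2 rfl

/-- In a chain `u ≤ v ≤ w`, the distance from `u` to `v` is at most that from `u` to `w`. -/
lemma GUS_dle1 (S : GUSemilattice A P) {u v w : A} (h1 : u ≤ v) (h2 : v ≤ w) :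
    S.d u v ≤ S.d u w := by
  have h3 : v ⊓ u = u := inf_eq_right.mpr h1
  have h4 : v ⊓ w = v := inf_eq_left.mpr h2
  have h5 := S.d_inf_inf_le v u w
  rwa [h3, h4] at h5

/-- In a chain `u ≤ v ≤ w`, the distance from `v` to `w` is at most that from `u` to `w`. -/
lemma GUS_dle2 (S : GUSemilattice A P) {u v w : A} (h1 : u ≤ v) (h2 : v ≤ w) :
    S.d v w ≤ S.d u w := by
  refine S.d_ultra v u w (S.d u w) ?_ le_rfl
  rw [S.d_symm]
  exact GUS_dle1 S h1 h2

/-- A strictly contracting function is (non-strictly) contracting. -/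
lemma GUS_contr_le (S : GUSemilattice A P) {F : A → A} (hF : S.StrictlyContracting F)
    (a b : A) : S.d (F a) (F b) ≤ S.d a b := by
  by_cases h : a = b
  · subst h
    rw [GUS_d_self]
    exact bot_le
  · exact (hF a b h).le

/-- If `F b ⊓ F (F b) = b`, then `b` is the (unique) fixed point of `F`. -/
lemma GUS_fix (S : GUSemilattice A P) {F : A → A} (hF : S.StrictlyContracting F)
    {x : A} (hx : F x = x) {b : A} (hb : F b ⊓ F (F b) = b) : b = x := by
  have hFb : F b = b := by
    by_contra hne
    have h1 : S.d (F b) (F (F b)) < S.d b (F b) := hF b (F b) fun e => hne e.symm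
    have h2 : S.d (F b ⊓ F (F b)) (F b ⊓ F b) ≤ S.d (F (F b)) (F b) :=
      S.d_inf_inf_le (F b) (F (F b)) (F b)
    rw [hb, inf_idem, S.d_symm (F (F b)) (F b)] at h2
    exact absurd (lt_of_le_of_lt h2 h1) (lt_irrefl _)
  by_contra hne
  have h := hF b x hne
  rw [hFb, hx] at h
  exact absurd h (lt_irrefl _)

/-- The key "step" lemma: `F c ⊓ F (F c)` is below its own image under
`b ↦ F b ⊓ F (F b)`. -/
lemma GUS_step (S : GUSemilattice A P) {F : A → A} (hF : S.StrictlyContracting F) (c : A) :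
    F c ⊓ F (F c) ≤
      F (F c ⊓ F (F c)) ⊓ F (F (F c ⊓ F (F c))) := by
  have h1 : S.d (F c ⊓ F (F c)) (F c) ≤ S.d (F c) (F (F c)) := by
    have h := S.d_inf_inf_le (F c) (F (F c)) (F c)
    rw [inf_idem] at h
    rw [S.d_symm (F c) (F (F c))]
    exact h
  have h2 : S.d (F (F c ⊓ F (F c))) (F (F c)) ≤ S.d (F c) (F (F c)) :=
    le_trans (GUS_contr_le S hF (F c ⊓ F (F c)) (F c)) h1
  have h3 : S.d (F (F c ⊓ F (F c))) (F c) ≤ S.d (F c) (F (F c)) :=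
    S.d_ultra _ (F (F c)) (F c) _ h2 (le_of_eq (S.d_symm _ _))
  have h4 : F c ⊓ F (F c) ≤ F (F c ⊓ F (F c)) := by
    have h := S.inf_le_inf_of_d_le (F c) (F (F c ⊓ F (F c))) (F (F c))
      (by rw [S.d_symm]; exact h3)
    exact le_trans h inf_le_right
  have h5 : S.d (F c ⊓ F (F c)) (F (F c ⊓ F (F c))) ≤ S.d (F c) (F (F c)) :=
    S.d_ultra _ (F c) _ _ h1 (by rw [S.d_symm]; exact h3)
  have h6 : S.d (F (F (F c ⊓ F (F c)))) (F (F c ⊓ F (F c))) ≤ S.d (F c) (F (F c)) :=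
    le_trans (GUS_contr_le S hF _ _) (by rw [S.d_symm]; exact h5)
  have h7 : S.d (F (F (F c ⊓ F (F c)))) (F c) ≤ S.d (F c) (F (F c)) :=
    S.d_ultra _ (F (F c ⊓ F (F c))) (F c) _ h6 h3
  have h8 : F c ⊓ F (F c) ≤ F (F (F c ⊓ F (F c))) := by
    have h := S.inf_le_inf_of_d_le (F c) (F (F (F c ⊓ F (F c)))) (F (F c))
      (by rw [S.d_symm]; exact h7)
    exact le_trans h inf_le_right
  exact le_inf h4 h8

theorem transfinite_iteration_computes_the_fixedPoint
    (S : GUSemilattice A P) (hdc : DirectedComplete A)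
    (F : A → A) (hF : S.StrictlyContracting F)
    (x : A) (hx : F x = x)
    (a : A)
    (g : Ordinal → A)
    (hg0 : g 0 = F a ⊓ F (F a))
    (hgsucc : ∀ α : Ordinal, g (α + 1) = F (g α) ⊓ F (F (g α)))
    (hglim : ∀ l : Ordinal, Order.IsSuccLimit l → IsLUB (g '' Set.Iio l) (g l))
    (κ : Ordinal)
    (hκ : ¬ ∃ φ : Ordinal → A,
      ∀ β γ : Ordinal, β < γ → γ < κ → φ β ≤ φ γ ∧ φ β ≠ φ γ) :
    g κ = x := by
  -- Step 1: each step of the iteration increases.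
  have key : ∀ α : Ordinal, g α ≤ g (α + 1) := by
    intro α
    induction α using Ordinal.induction with
    | h α IH =>
    rcases Ordinal.zero_or_succ_or_isSuccLimit α with h0 | ⟨β, hβ⟩ | hlim
    · subst h0
      rw [hgsucc 0, hg0]
      exact GUS_step S hF a
    · subst hβ
      rw [← Ordinal.add_one_eq_succ]
      rw [hgsucc (β + 1), hgsucc β]
      exact GUS_step S hF (g β)
    · -- limit case
      have hs := hglim α hlim
      by_cases hmax : ∃ δ, δ < α ∧ g δ = g α
      · -- the lub is attained: then it is the fixed point
        obtain ⟨δ, hδ, hgs⟩ := hmax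
        have hδ1 : δ + 1 < α := by
          rw [Ordinal.add_one_eq_succ]; exact hlim.succ_lt hδ
        have h1 : g (δ + 1) ≤ g α := hs.1 ⟨δ + 1, hδ1, rfl⟩
        have h2 : g δ ≤ g (δ + 1) := IH δ hδ
        have h3 : g (δ + 1) = g α := le_antisymm h1 (hgs ▸ h2)
        have h4 : F (g α) ⊓ F (F (g α)) = g α := by
          rw [← hgs, ← hgsucc δ, h3, ← hgs]
        have h5 : g α = x := GUS_fix S hF hx h4
        rw [hgsucc α, h5, hx, hx, inf_idem]
      · -- the lub is not attained
        push_neg at hmax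
        have ub1 : ∀ δ, δ < α → g δ ≤ g α ⊓ F (g α) := by
          intro δ hδ
          have hδ1 : δ + 1 < α := by
            rw [Ordinal.add_one_eq_succ]; exact hlim.succ_lt hδ
          have hbb' : g δ ≤ g (δ + 1) := IH δ hδ
          have hb's : g (δ + 1) ≤ g α := hs.1 ⟨δ + 1, hδ1, rfl⟩
          have hbs : g δ ≤ g α := le_trans hbb' hb's
          have hne : g δ ≠ g α := hmax δ hδ
          have hb'F : g (δ + 1) ≤ F (g δ) := by
            rw [hgsucc δ]; exact inf_le_left
          have A1 : S.d (g δ) (g (δ + 1)) ≤ S.d (g δ) (g α) := GUS_dle1 S hbb' hb's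
          have A2 : S.d (g (δ + 1)) (g α ⊓ F (g δ)) ≤ S.d (g δ) (g α) :=
            le_trans (GUS_dle1 S (le_inf hb's hb'F) inf_le_left) (GUS_dle2 S hbb' hb's)
          have A3 : S.d (g α ⊓ F (g δ)) (g α ⊓ F (g α)) ≤ S.d (F (g δ)) (F (g α)) :=
            S.d_inf_inf_le (g α) (F (g δ)) (F (g α))
          have A4 : S.d (F (g δ)) (F (g α)) ≤ S.d (g δ) (g α) := (hF _ _ hne).le
          have A5 : S.d (g (δ + 1)) (g α ⊓ F (g α)) ≤ S.d (g δ) (g α) :=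
            S.d_ultra _ (g α ⊓ F (g δ)) _ _ A2 (le_trans A3 A4)
          have A6 : S.d (g δ) (g α ⊓ F (g α)) ≤ S.d (g δ) (g α) :=
            S.d_ultra _ (g (δ + 1)) _ _ A1 A5
          have A7 : g δ ⊓ g α ≤ g δ ⊓ (g α ⊓ F (g α)) :=
            S.inf_le_inf_of_d_le (g δ) (g α ⊓ F (g α)) (g α) A6
          have A8 : g δ ⊓ g α = g δ := inf_eq_left.mpr hbs
          calc g δ = g δ ⊓ g α := A8.symm
            _ ≤ g δ ⊓ (g α ⊓ F (g α)) := A7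
            _ ≤ g α ⊓ F (g α) := inf_le_right
        have ub2 : ∀ δ, δ < α → g δ ≤ g α ⊓ F (F (g α)) := by
          intro δ hδ
          have hδ1 : δ + 1 < α := by
            rw [Ordinal.add_one_eq_succ]; exact hlim.succ_lt hδ
          have hbb' : g δ ≤ g (δ + 1) := IH δ hδ
          have hb's : g (δ + 1) ≤ g α := hs.1 ⟨δ + 1, hδ1, rfl⟩
          have hbs : g δ ≤ g α := le_trans hbb' hb's
          have hne : g δ ≠ g α := hmax δ hδ
          have hb'F : g (δ + 1) ≤ F (F (g δ)) := by
            rw [hgsucc δ]; exact inf_le_right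
          have A1 : S.d (g δ) (g (δ + 1)) ≤ S.d (g δ) (g α) := GUS_dle1 S hbb' hb's
          have A2 : S.d (g (δ + 1)) (g α ⊓ F (F (g δ))) ≤ S.d (g δ) (g α) :=
            le_trans (GUS_dle1 S (le_inf hb's hb'F) inf_le_left) (GUS_dle2 S hbb' hb's)
          have A3 : S.d (g α ⊓ F (F (g δ))) (g α ⊓ F (F (g α))) ≤
              S.d (F (F (g δ))) (F (F (g α))) :=
            S.d_inf_inf_le (g α) (F (F (g δ))) (F (F (g α)))
          have A4 : S.d (F (F (g δ))) (F (F (g α))) ≤ S.d (g δ) (g α) :=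
            le_trans (GUS_contr_le S hF _ _) (hF _ _ hne).le
          have A5 : S.d (g (δ + 1)) (g α ⊓ F (F (g α))) ≤ S.d (g δ) (g α) :=
            S.d_ultra _ (g α ⊓ F (F (g δ))) _ _ A2 (le_trans A3 A4)
          have A6 : S.d (g δ) (g α ⊓ F (F (g α))) ≤ S.d (g δ) (g α) :=
            S.d_ultra _ (g (δ + 1)) _ _ A1 A5
          have A7 : g δ ⊓ g α ≤ g δ ⊓ (g α ⊓ F (F (g α))) :=
            S.inf_le_inf_of_d_le (g δ) (g α ⊓ F (F (g α))) (g α) A6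
          have A8 : g δ ⊓ g α = g δ := inf_eq_left.mpr hbs
          calc g δ = g δ ⊓ g α := A8.symm
            _ ≤ g δ ⊓ (g α ⊓ F (F (g α))) := A7
            _ ≤ g α ⊓ F (F (g α)) := inf_le_right
        have hsF : g α ≤ F (g α) := by
          have h := hs.2 (by rintro _ ⟨δ, hδ, rfl⟩; exact ub1 δ hδ)
          exact le_trans h inf_le_right
        have hsFF : g α ≤ F (F (g α)) := by
          have h := hs.2 (by rintro _ ⟨δ, hδ, rfl⟩; exact ub2 δ hδ)
          exact le_trans h inf_le_right
        rw [hgsucc α]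
        exact le_inf hsF hsFF
  -- Step 2: g is monotone.
  have mono : ∀ γ β : Ordinal, β ≤ γ → g β ≤ g γ := by
    intro γ
    induction γ using Ordinal.induction with
    | h γ IH =>
    intro β hβ
    rcases eq_or_lt_of_le hβ with rfl | hlt
    · exact le_rfl
    rcases Ordinal.zero_or_succ_or_isSuccLimit γ with h0 | ⟨η, hη⟩ | hlim
    · rw [h0] at hlt
      exact absurd hlt (not_lt_zero (a := β))
    · subst hη
      have hβη : β ≤ η := Order.lt_succ_iff.mp hlt
      have hηlt : η < Order.succ η := Order.lt_succ η
      have h1 : g β ≤ g η := IH η hηlt β hβη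
      rw [← Ordinal.add_one_eq_succ]
      exact le_trans h1 (key η)
    · exact (hglim γ hlim).1 ⟨β, hlt, rfl⟩
  -- Step 3: from hκ, the iteration collides below κ, hence reaches x.
  have hpair : ∃ β γ : Ordinal, β < γ ∧ γ < κ ∧ g β = g γ := by
    by_contra hcon
    push_neg at hcon
    exact hκ ⟨g, fun β γ h1 h2 => ⟨mono γ β h1.le, hcon β γ h1 h2⟩⟩
  obtain ⟨β, γ, hβγ, hγκ, heq⟩ := hpair
  have hβ1γ : β + 1 ≤ γ := by
    rw [Ordinal.add_one_eq_succ]; exact Order.succ_le_of_lt hβγ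
  have hsand : g β = g (β + 1) := by
    refine le_antisymm (key β) ?_
    have h := mono γ (β + 1) hβ1γ
    rwa [← heq] at h
  have hfixβ : g β = x := by
    apply GUS_fix S hF hx
    rw [← hgsucc β, ← hsand]
  -- Step 4: propagate the value x from β up to κ.
  have hfinal : ∀ δ : Ordinal, β ≤ δ → g δ = x := by
    intro δ
    induction δ using Ordinal.induction with
    | h δ IH =>
    intro hβδ
    rcases eq_or_lt_of_le hβδ with rfl | hlt
    · exact hfixβ
    rcases Ordinal.zero_or_succ_or_isSuccLimit δ with h0 | ⟨η, hη⟩ | hlim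
    · rw [h0] at hlt
      exact absurd hlt (not_lt_zero (a := β))
    · subst hη
      have hβη : β ≤ η := Order.lt_succ_iff.mp hlt
      have h1 : g η = x := IH η (Order.lt_succ η) hβη
      rw [← Ordinal.add_one_eq_succ, hgsucc η, h1, hx, hx, inf_idem]
    · have hs := hglim δ hlim
      have hub : x ∈ upperBounds (g '' Set.Iio δ) := by
        rintro _ ⟨ε, hε, rfl⟩
        rcases le_or_gt β ε with h | h
        · exact (IH ε hε h).le
        · rw [← hfixβ]
          exact mono β ε h.le
      have h1 : g δ ≤ x := hs.2 hub
      have h2 : x ≤ g δ := by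
        rw [← hfixβ]
        exact hs.1 ⟨β, hlt, rfl⟩
      exact le_antisymm h1 h2
  exact hfinal κ (le_of_lt (lt_trans hβγ hγκ))
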